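/- Let a, b, c, d be integers with ad − bc = n > 0, c > 0, and let z = x + iy ∈ ℍ with y > 0. Set u = |gz − z|²/(4·Im(gz)·Im(z)) where gz = (az+b)/(cz+d). If u < δ, then |2cx + d − a| ≤ 2√(δn) and ||cz+d| − √n| ≤ 4√(δn). -/

import Mathlib

open Complex

set_option maxHeartbeats 1600000 in
theorem point_pair_invariant_bounds (a b c d n : ℤ) (x y δ : ℝ)
    (hdet : a * d - b * c = n) (hn : 0 < n) (hc : 0 < c) (hy : 0 < y) (hδ : 0 ≤ δ) :
    let z : ℂ := (x : ℂ) + (y : ℂ) * Complex.I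
    let gz : ℂ := ((a : ℂ) * z + (b : ℂ)) / ((c : ℂ) * z + (d : ℂ))
    let u : ℝ := ‖gz - z‖ ^ 2 / (4 * gz.im * z.im)
    u < δ →
      |2 * (c : ℝ) * x + (d : ℝ) - (a : ℝ)| ≤ 2 * Real.sqrt (δ * n) ∧
      |‖(c : ℂ) * z + (d : ℂ)‖ - Real.sqrt n| ≤ 4 * Real.sqrt (δ * n) := by
  intro z gz u hu
  have hnR : (0:ℝ) < (n:ℝ) := by exact_mod_cast hn
  have hcR : (0:ℝ) < (c:ℝ) := by exact_mod_cast hc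
  set w : ℂ := (c:ℂ) * z + (d:ℂ) with hw
  have hzre : z.re = x := by simp [z]
  have hzim : z.im = y := by simp [z]
  have hwre : w.re = c * x + d := by simp [hw, z]
  have hwim : w.im = c * y := by simp [hw, z]
  have hwne : w ≠ 0 := by
    intro h
    rw [h] at hwim
    simp at hwim
    rcases hwim with h1 | h1
    · exact hc.ne' h1
    · exact hy.ne' h1
  have hNw : 0 < Complex.normSq w := Complex.normSq_pos.mpr hwne
  set Q : ℂ := z * w - ((a:ℂ) * z + (b:ℂ)) with hQ
  have hQre : Q.re = c*x^2 + d*x - c*y^2 - a*x - b := by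
    simp [hQ, hw, z, Complex.mul_re, Complex.mul_im]
    ring
  have hQim : Q.im = y * (2*c*x + d - a) := by
    simp [hQ, hw, z, Complex.mul_re, Complex.mul_im]
    ring
  -- gz.im
  have hgzim : gz.im = (n * y) / Complex.normSq w := by
    have : gz = ((a:ℂ)*z + (b:ℂ)) / w := rfl
    rw [this, Complex.div_im]
    rw [div_sub_div_same]
    congr 1
    have h1 : ((a:ℂ)*z + (b:ℂ)).im = a * y := by simp [z]
    have h2 : ((a:ℂ)*z + (b:ℂ)).re = a * x + b := by simp [z]
    rw [h1, h2, hwre, hwim]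
    have hd : (a:ℝ) * d - b * c = n := by exact_mod_cast congrArg (Int.cast : ℤ → ℝ) hdet
    nlinarith [hd]
  -- |gz - z|^2
  have hsub : gz - z = -Q / w := by
    rw [show gz = ((a:ℂ)*z + (b:ℂ)) / w from rfl]
    field_simp [hQ]
    ring
  have habs : ‖gz - z‖ ^ 2 = Complex.normSq Q / Complex.normSq w := by
    rw [hsub, norm_div, div_pow, Complex.sq_norm, Complex.sq_norm, Complex.normSq_neg]
  -- u value
  have huval : u = Complex.normSq Q / (4 * n * y^2) := by
    show ‖gz - z‖ ^ 2 / (4 * gz.im * z.im) = _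
    rw [habs, hgzim, hzim]
    have hden : 4 * ((n:ℝ)*y/Complex.normSq w) * y = 4*(n:ℝ)*y^2 / Complex.normSq w := by
      field_simp
    rw [hden, div_div_div_eq, mul_comm (Complex.normSq Q) (Complex.normSq w),
      mul_div_mul_left _ _ hNw.ne']
  have hQlt : Complex.normSq Q < 4 * n * y^2 * δ := by
    rw [huval] at hu
    have h4 : (0:ℝ) < 4 * n * y^2 := by positivity
    have := (div_lt_iff₀ h4).mp hu
    linarith
  have hNQ : Complex.normSq Q = Q.re^2 + Q.im^2 := by
    rw [Complex.normSq_apply]; ring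
  clear hu huval habs hgzim hsub
  clear_value u gz z
  clear_value w Q
  -- abbreviations
  set t : ℝ := 2*(c:ℝ)*x + d - a with ht
  set q : ℝ := Real.sqrt (δ * n) with hqdef
  have hq0 : 0 ≤ q := Real.sqrt_nonneg _
  have hq2 : q^2 = δ * n := Real.sq_sqrt (by positivity)
  clear_value t q
  -- first inequality
  have ht2 : t^2 ≤ 4 * δ * n := by
    have h6 : y^2 * t^2 ≤ Complex.normSq Q := by
      rw [hNQ, hQim]; nlinarith [sq_nonneg Q.re]
    have h5 : t^2 * y^2 < (4*δ*n) * y^2 := by nlinarith [h6, hQlt]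
    exact le_of_lt (lt_of_mul_lt_mul_right h5 (by positivity : (0:ℝ) ≤ y^2))
  have first : |t| ≤ 2 * q := by
    have h1 : |t|^2 ≤ (2*q)^2 := by rw [_root_.sq_abs]; linarith [ht2, hq2]
    exact (pow_le_pow_iff_left₀ (abs_nonneg t) (by positivity) two_ne_zero).mp h1
  refine ⟨first, ?_⟩
  -- second inequality
  set s : ℝ := ‖w‖ with hs
  have hs2 : s^2 = Complex.normSq w := Complex.sq_norm w
  have hspos : 0 < s := by
    rw [hs]
    exact (norm_pos_iff.mpr hwne)
  clear_value s
  have hRle : |(c:ℝ)*x + d| ≤ s := by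
    rw [← hwre, hs]; exact Complex.abs_re_le_norm w
  have hcyle : (c:ℝ)*y ≤ s := by
    have := Complex.abs_im_le_norm w
    rw [hwim] at this
    calc (c:ℝ)*y ≤ |(c:ℝ)*y| := le_abs_self _
    _ ≤ s := by rw [hs]; exact this
  have hQrele : |Q.re| ≤ ‖Q‖ := Complex.abs_re_le_norm Q
  have hAQ : ‖Q‖ ^ 2 = Complex.normSq Q := Complex.sq_norm Q
  -- c * |Q.re| ≤ 2 q (c y)
  have hcA : (c:ℝ) * |Q.re| ≤ 2 * q * ((c:ℝ)*y) := by
    have h2 : |Q.re|^2 ≤ 4*q^2*y^2 := by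
      rw [_root_.sq_abs, hq2]
      have h3 : Q.re^2 ≤ Complex.normSq Q := by rw [hNQ]; nlinarith [sq_nonneg Q.im]
      linarith [h3, hQlt]
    have h1 : ((c:ℝ) * |Q.re|)^2 ≤ (2*q*((c:ℝ)*y))^2 := by
      have h4 := mul_le_mul_of_nonneg_left h2 (sq_nonneg (c:ℝ))
      linarith [h4]
    exact (pow_le_pow_iff_left₀ (mul_nonneg hcR.le (abs_nonneg Q.re)) (by positivity) two_ne_zero).mp h1
  -- key identity: s^2 - n = t*(cx+d) - c*Q.re
  have hkey : s^2 - n = t * ((c:ℝ)*x + d) - c * Q.re := by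
    have hd : (a:ℝ) * d - b * c = n := by exact_mod_cast congrArg (Int.cast : ℤ → ℝ) hdet
    rw [hs2, Complex.normSq_apply, hwre, hwim, hQre, ht]
    nlinarith [hd]
  have hbound : |s^2 - (n:ℝ)| ≤ 4 * q * s := by
    rw [hkey]
    calc |t * ((c:ℝ)*x + d) - c * Q.re| ≤ |t * ((c:ℝ)*x + d)| + |c * Q.re| := abs_sub _ _
    _ = |t| * |(c:ℝ)*x + d| + c * |Q.re| := by rw [abs_mul, abs_mul, abs_of_pos hcR]
    _ ≤ (2*q) * s + 2*q*((c:ℝ)*y) :=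
        add_le_add (mul_le_mul first hRle (abs_nonneg _) (by positivity)) hcA
    _ ≤ 2*q*s + 2*q*s := by gcongr
    _ = 4*q*s := by ring
  -- conclude
  have hr0 : 0 ≤ Real.sqrt (n:ℝ) := Real.sqrt_nonneg _
  have hr2 : Real.sqrt (n:ℝ) ^ 2 = n := Real.sq_sqrt hnR.le
  set r : ℝ := Real.sqrt (n:ℝ)
  have h1 : |s - r| * (s + r) = |s^2 - (n:ℝ)| := by
    rw [← hr2]
    rw [show s^2 - r^2 = (s - r) * (s + r) by ring, abs_mul,
      _root_.abs_of_nonneg (by positivity : (0:ℝ) ≤ s + r)]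
  have h2 : |s - r| * (s + r) ≤ 4*q*(s+r) := by
    rw [h1]
    calc |s^2 - (n:ℝ)| ≤ 4*q*s := hbound
    _ ≤ 4*q*(s+r) := by nlinarith [mul_nonneg hq0 hr0]
  have hsr : 0 < s + r := by positivity
  calc |s - r| = |s - r| * (s+r) / (s+r) := by field_simp
  _ ≤ 4*q*(s+r)/(s+r) := by gcongr
  _ = 4*q := by field_simp
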